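/- (Squared norm of the k-Mersenne-Lucas octonion) For every natural number n, ∑_{r=0}^{7} m_{k,n+r}² = λ₁^{2n}·∑_{r=0}^{7} λ₁^{2r} + λ₂^{2n}·∑_{r=0}^{7} λ₂^{2r} + 255·2^{n+1}, where λ₁, λ₂ are the roots of λ² − 3kλ + 2 = 0. -/

import Mathlib

noncomputable def m (k : ℝ) : ℕ → ℝ
  | 0 => 2
  | 1 => 3*k
  | (n+2) => 3*k * m k (n+1) - 2 * m k n

lemma binet (k : ℝ) (lam1 lam2 : ℝ) (hsum : lam1 + lam2 = 3*k)
    (hprod : lam1 * lam2 = 2) (n : ℕ) : m k n = lam1^n + lam2^n := by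
  induction n using Nat.strong_induction_on with
  | _ n ih =>
    match n with
    | 0 => norm_num [m]
    | 1 => simp only [m, pow_one, ← hsum]
    | (n+2) =>
      rw [show m k (n+2) = 3*k * m k (n+1) - 2 * m k n from rfl,
        ih (n+1) (by omega), ih n (by omega), ← hsum, ← hprod]
      ring

theorem kMersenneLucas_oct_norm (k : ℝ) (hk : 9*k^2 > 8)
    (lam1 lam2 : ℝ)
    (h1 : lam1 = (3*k + Real.sqrt (9*k^2 - 8))/2)
    (h2 : lam2 = (3*k - Real.sqrt (9*k^2 - 8))/2)
    (n : ℕ) :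
    ∑ r ∈ Finset.range 8, (m k (n+r))^2
      = lam1^(2*n) * ∑ r ∈ Finset.range 8, lam1^(2*r)
        + lam2^(2*n) * ∑ r ∈ Finset.range 8, lam2^(2*r)
        + 255 * 2^(n+1) := by
  have hsq : Real.sqrt (9*k^2 - 8) ^ 2 = 9*k^2 - 8 :=
    Real.sq_sqrt (by linarith)
  have hsum : lam1 + lam2 = 3*k := by rw [h1, h2]; ring
  have hprod : lam1 * lam2 = 2 := by
    rw [h1, h2]
    have : (3*k + Real.sqrt (9*k^2-8))/2 * ((3*k - Real.sqrt (9*k^2-8))/2)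
        = (9*k^2 - Real.sqrt (9*k^2-8)^2)/4 := by ring
    rw [this, hsq]; ring
  have hb := binet k lam1 lam2 hsum hprod
  have key : ∀ r : ℕ, (m k (n+r))^2
      = lam1^(2*n) * lam1^(2*r) + lam2^(2*n) * lam2^(2*r) + 2 * 2^(n+r) := by
    intro r
    have : (2:ℝ)^(n+r) = (lam1*lam2)^(n+r) := by rw [hprod]
    have e1 : lam1^(2*n)*lam1^(2*r) = (lam1^(n+r))^2 := by
      rw [← pow_add, ← pow_mul]; congr 1; ring
    have e2 : lam2^(2*n)*lam2^(2*r) = (lam2^(n+r))^2 := by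
      rw [← pow_add, ← pow_mul]; congr 1; ring
    rw [hb, this, e1, e2, mul_pow]; ring
  have hsum8 : ∑ r ∈ Finset.range 8, (m k (n+r))^2
      = ∑ r ∈ Finset.range 8, (lam1^(2*n) * lam1^(2*r) + lam2^(2*n) * lam2^(2*r) + 2 * 2^(n+r)) :=
    Finset.sum_congr rfl (fun r _ => key r)
  rw [hsum8, Finset.sum_add_distrib, Finset.sum_add_distrib, ← Finset.mul_sum, ← Finset.mul_sum]
  have : ∑ r ∈ Finset.range 8, (2:ℝ) * 2^(n+r) = 255 * 2^(n+1) := by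
    simp [Finset.sum_range_succ, pow_add]; ring
  rw [this]
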